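/- (Power-field case of Theorem 3) If the constants satisfy Σ_{t=1}^T (4P₀γ_t²/N₀)·max_i min_k |h_{k,t}(i)|²/(D²ζ²_{k,t}(i)) < R, then the choice η_t(i) = P₀·min_k |h_{k,t}(i)|²/(D²ζ²_{k,t}(i)), σ_{k,t}(i) = 0, ξ_t = N₀ is feasible for problem P₁ and minimizes the objective Σ_t (1−μ/L)^{−t}(Σ_{k,i} σ²_{k,t}(i) + Σ_i N₀/η_t(i)), since the objective is decreasing in each η_t(i) and each η_t(i) attains its maximum feasible value under the power constraints. -/

import Mathlib

/-- Feasibility for problem P₁: `η t i` transmit power scalars, `σ t k i`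
artificial-noise standard deviations, `ξ t` effective-noise power lower bound. -/
def FeasibleP1 {T K I : ℕ} (hI : 0 < I) (N₀ D P₀ e' R : ℝ)
    (ζ hsq : Fin T → Fin K → Fin I → ℝ) (γ : Fin T → ℝ)
    (η : Fin T → Fin I → ℝ) (σ : Fin T → Fin K → Fin I → ℝ)
    (ξ : Fin T → ℝ) : Prop :=
  (∀ t i, 0 < η t i) ∧ (∀ t k i, 0 ≤ σ t k i) ∧ (∀ t, 0 < ξ t) ∧
  (∑ t, (4 * γ t ^ 2 / ξ t) *
      Finset.univ.sup' ⟨⟨0, hI⟩, Finset.mem_univ _⟩ (η t) ≤ R) ∧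
  (∀ t i, ξ t ≤ η t i * ∑ k, σ t k i ^ 2 + N₀) ∧
  (∀ t k i, η t i * (D ^ 2 * ζ t k i ^ 2 + e' * σ t k i ^ 2) ≤ P₀ * hsq t k i)

/-- Objective of problem P₁. -/
noncomputable def ObjP1 {T K I : ℕ} (μ L N₀ : ℝ)
    (η : Fin T → Fin I → ℝ) (σ : Fin T → Fin K → Fin I → ℝ) : ℝ :=
  ∑ t, ((1 - μ / L)⁻¹) ^ (t.val + 1) *
    (∑ k, ∑ i, σ t k i ^ 2 + ∑ i, N₀ / η t i)

theorem stmt17 {T K I : ℕ} (hK : 0 < K) (hI : 0 < I)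
    (μ L N₀ D P₀ e' R : ℝ)
    (hμ : 0 < μ) (hμL : μ ≤ L) (hN₀ : 0 < N₀) (hD : 0 < D) (hP₀ : 0 < P₀)
    (he' : 0 < e') (hR : 0 < R)
    (ζ hsq : Fin T → Fin K → Fin I → ℝ)
    (hζ : ∀ t k i, 0 < ζ t k i) (hhsq : ∀ t k i, 0 < hsq t k i)
    (γ : Fin T → ℝ) (hγ : ∀ t, 0 < γ t)
    (ηstar : Fin T → Fin I → ℝ)
    (hηstar : ∀ t i, ηstar t i = P₀ *
      Finset.univ.inf' ⟨⟨0, hK⟩, Finset.mem_univ _⟩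
        (fun k => hsq t k i / (D ^ 2 * ζ t k i ^ 2)))
    (hcond : ∑ t, (4 * P₀ * γ t ^ 2 / N₀) *
        Finset.univ.sup' ⟨⟨0, hI⟩, Finset.mem_univ _⟩
          (fun i => Finset.univ.inf' ⟨⟨0, hK⟩, Finset.mem_univ _⟩
            (fun k => hsq t k i / (D ^ 2 * ζ t k i ^ 2))) < R) :
    FeasibleP1 hI N₀ D P₀ e' R ζ hsq γ ηstar
        (fun _ _ _ => (0 : ℝ)) (fun _ => N₀) ∧
      ∀ (η : Fin T → Fin I → ℝ) (σ : Fin T → Fin K → Fin I → ℝ)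
        (ξ : Fin T → ℝ), FeasibleP1 hI N₀ D P₀ e' R ζ hsq γ η σ ξ →
          ObjP1 μ L N₀ ηstar (fun (_ : Fin T) (_ : Fin K) (_ : Fin I) => (0 : ℝ))
            ≤ ObjP1 μ L N₀ η σ := by
  have hL : 0 < L := lt_of_lt_of_le hμ hμL
  have hinfpos : ∀ t i, 0 < Finset.univ.inf' ⟨⟨0, hK⟩, Finset.mem_univ _⟩
      (fun k => hsq t k i / (D ^ 2 * ζ t k i ^ 2)) := by
    intro t i
    refine (Finset.lt_inf'_iff _).2 ?_
    intro k _
    exact div_pos (hhsq t k i) (mul_pos (by positivity) (pow_pos (hζ t k i) 2))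
  have hηpos : ∀ t i, 0 < ηstar t i := by
    intro t i; rw [hηstar]; exact mul_pos hP₀ (hinfpos t i)
  have hsupstar : ∀ t, Finset.univ.sup' ⟨⟨0, hI⟩, Finset.mem_univ _⟩ (ηstar t)
      = P₀ * Finset.univ.sup' ⟨⟨0, hI⟩, Finset.mem_univ _⟩
        (fun i => Finset.univ.inf' ⟨⟨0, hK⟩, Finset.mem_univ _⟩
          (fun k => hsq t k i / (D ^ 2 * ζ t k i ^ 2))) := by
    intro t
    apply le_antisymm
    · apply Finset.sup'_le
      intro i _
      rw [hηstar]
      have hle := Finset.le_sup' (s := (Finset.univ : Finset (Fin I)))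
        (fun i => Finset.univ.inf' ⟨⟨0, hK⟩, Finset.mem_univ _⟩
          (fun k => hsq t k i / (D ^ 2 * ζ t k i ^ 2))) (Finset.mem_univ i)
      exact mul_le_mul_of_nonneg_left hle hP₀.le
    · obtain ⟨i₀, -, hi₀⟩ := Finset.exists_mem_eq_sup'
        (⟨⟨0, hI⟩, Finset.mem_univ _⟩ : (Finset.univ : Finset (Fin I)).Nonempty)
        (fun i => Finset.univ.inf' ⟨⟨0, hK⟩, Finset.mem_univ _⟩
          (fun k => hsq t k i / (D ^ 2 * ζ t k i ^ 2)))
      rw [hi₀, ← hηstar]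
      exact Finset.le_sup' _ (Finset.mem_univ i₀)
  have hfeas : FeasibleP1 hI N₀ D P₀ e' R ζ hsq γ ηstar
      (fun _ _ _ => (0 : ℝ)) (fun _ => N₀) := by
    refine ⟨hηpos, fun _ _ _ => le_refl 0, fun _ => hN₀, ?_, ?_, ?_⟩
    · calc ∑ t, (4 * γ t ^ 2 / N₀) *
            Finset.univ.sup' ⟨⟨0, hI⟩, Finset.mem_univ _⟩ (ηstar t)
          = ∑ t, (4 * P₀ * γ t ^ 2 / N₀) *
            Finset.univ.sup' ⟨⟨0, hI⟩, Finset.mem_univ _⟩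
              (fun i => Finset.univ.inf' ⟨⟨0, hK⟩, Finset.mem_univ _⟩
                (fun k => hsq t k i / (D ^ 2 * ζ t k i ^ 2))) := by
            apply Finset.sum_congr rfl
            intro t _
            rw [hsupstar t]; ring
        _ ≤ R := hcond.le
    · intro t i; simp
    · intro t k i
      rw [hηstar]
      have h1 : Finset.univ.inf' ⟨⟨0, hK⟩, Finset.mem_univ _⟩
          (fun k' => hsq t k' i / (D ^ 2 * ζ t k' i ^ 2))
          ≤ hsq t k i / (D ^ 2 * ζ t k i ^ 2) :=
        Finset.inf'_le _ (Finset.mem_univ k)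
      have hd : (0:ℝ) < D ^ 2 * ζ t k i ^ 2 :=
        mul_pos (by positivity) (pow_pos (hζ t k i) 2)
      have heq : P₀ * (hsq t k i / (D ^ 2 * ζ t k i ^ 2)) * (D ^ 2 * ζ t k i ^ 2)
          = P₀ * hsq t k i := by rw [mul_assoc, div_mul_cancel₀ _ hd.ne']
      nlinarith [mul_le_mul_of_nonneg_right
        (mul_le_mul_of_nonneg_left h1 hP₀.le) hd.le]
  refine ⟨hfeas, ?_⟩
  intro η σ ξ hf
  obtain ⟨hηp, hσp, hξp, hsum, hxi, hpow⟩ := hf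
  have hηle : ∀ t i, η t i ≤ ηstar t i := by
    intro t i
    rw [hηstar, mul_comm, ← div_le_iff₀ hP₀]
    apply Finset.le_inf'
    intro k _
    have hd : (0:ℝ) < D ^ 2 * ζ t k i ^ 2 :=
      mul_pos (by positivity) (pow_pos (hζ t k i) 2)
    rw [div_le_div_iff₀ hP₀ hd]
    have h2 : 0 ≤ η t i * (e' * σ t k i ^ 2) :=
      mul_nonneg (hηp t i).le (by positivity)
    nlinarith [hpow t k i]
  have hcoef : 0 ≤ (1 - μ / L)⁻¹ := by
    apply inv_nonneg.mpr
    have : μ / L ≤ 1 := (div_le_one hL).mpr hμL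
    linarith
  unfold ObjP1
  apply Finset.sum_le_sum
  intro t _
  apply mul_le_mul_of_nonneg_left _ (pow_nonneg hcoef _)
  have h0 : ∑ k : Fin K, ∑ i : Fin I, (0:ℝ) ^ 2 = 0 := by simp
  rw [h0, zero_add]
  have h1 : ∑ i, N₀ / ηstar t i ≤ ∑ i, N₀ / η t i := by
    apply Finset.sum_le_sum
    intro i _
    exact div_le_div_of_nonneg_left hN₀.le (hηp t i) (hηle t i)
  have h2 : (0:ℝ) ≤ ∑ k, ∑ i, σ t k i ^ 2 := by positivity
  linarith
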